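/- Let K be a field of characteristic ≠ 2, 3, b, c ∈ K^* and suppose √c, ∛(4b) ∈ K. For each k ∈ {0, 1, 2}, the point P_k = (ω^k (t - c)/(-b·∛(4b)), √c (t - c)/(2b^2)) lies on the elliptic curve E_1 : y^2 = x^3 + t((t - c)/(2b^2))^2 over K(t), and P_0 + P_1 + P_2 = O. -/

import Mathlib

open Classical in
open WeierstrassCurve.Affine in
/-- Over `K(t)` (char `K` ≠ 2, 3, `ω` a primitive cube root of unity, `r² = c`,
`u³ = 4b`), the points `P_k = (ωᵏ(t - c)/(-b·∛(4b)), √c·(t - c)/(2b²))`, `k = 0, 1, 2`,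
lie on the elliptic curve `E₁ : y² = x³ + t((t - c)/(2b²))²` and sum to the identity. -/
theorem stmt_7 (K : Type*) [Field K] (h2 : (2 : K) ≠ 0) (h3 : (3 : K) ≠ 0)
    (ω : K) (hω : ω ^ 3 = 1) (hω1 : ω ≠ 1)
    (b c r u : K) (hb : b ≠ 0) (hc : c ≠ 0) (hr : r ^ 2 = c) (hu : u ^ 3 = 4 * b)
    (W : WeierstrassCurve.Affine (RatFunc K))
    (hW : W = ⟨0, 0, 0, 0, RatFunc.X *
      ((RatFunc.X - RatFunc.C c) / (2 * RatFunc.C b ^ 2)) ^ 2⟩)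
    (Px : ℕ → RatFunc K)
    (hPx : ∀ k, Px k = RatFunc.C (ω ^ k) * (RatFunc.X - RatFunc.C c) / (-(RatFunc.C (b * u))))
    (Py : RatFunc K)
    (hPy : Py = RatFunc.C r * (RatFunc.X - RatFunc.C c) / (2 * RatFunc.C b ^ 2)) :
    (∀ k, W.Equation (Px k) Py) ∧
      ∀ (h₀ : W.Nonsingular (Px 0) Py) (h₁ : W.Nonsingular (Px 1) Py)
        (h₂ : W.Nonsingular (Px 2) Py),
        Point.some _ _ h₀ + Point.some _ _ h₁ + Point.some _ _ h₂ = 0 := by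
  have h4 : (4 : K) ≠ 0 := by
    have h : (4 : K) = 2 * 2 := by norm_num
    rw [h]; exact mul_ne_zero h2 h2
  have hu0 : u ≠ 0 := fun h => h4 (by
    have h0 : (4 : K) * b = 0 := by rw [← hu, h]; ring
    rcases mul_eq_zero.mp h0 with h' | h'
    · exact h'
    · exact absurd h' hb)
  have hCinj : Function.Injective (RatFunc.C : K →+* RatFunc K) := RingHom.injective (RatFunc.C : K →+* RatFunc K)
  have hs : (RatFunc.X - RatFunc.C c : RatFunc K) ≠ 0 := by
    have h : (RatFunc.X - RatFunc.C c : RatFunc K) =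
        algebraMap (Polynomial K) (RatFunc K) (Polynomial.X - Polynomial.C c) := by
      rw [map_sub, RatFunc.algebraMap_X, RatFunc.algebraMap_C]
    rw [h]
    exact RatFunc.algebraMap_ne_zero (Polynomial.X_sub_C_ne_zero c)
  have hCb : (RatFunc.C b : RatFunc K) ≠ 0 := (map_ne_zero_iff _ hCinj).mpr hb
  have hCu : (RatFunc.C u : RatFunc K) ≠ 0 := (map_ne_zero_iff _ hCinj).mpr hu0
  have hbu : b * u ≠ 0 := mul_ne_zero hb hu0
  have hCbu : (RatFunc.C (b * u) : RatFunc K) ≠ 0 := (map_ne_zero_iff _ hCinj).mpr hbu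
  have hCbun : (-(RatFunc.C (b * u)) : RatFunc K) ≠ 0 := neg_ne_zero.mpr hCbu
  have hC2 : (2 : RatFunc K) ≠ 0 := by
    have h : (2 : RatFunc K) = RatFunc.C 2 := by rw [map_ofNat]
    rw [h]; exact (map_ne_zero_iff _ hCinj).mpr h2
  have hrC : (RatFunc.C r : RatFunc K) ^ 2 = RatFunc.C c := by rw [← map_pow, hr]
  have hbu3 : (RatFunc.C (b * u) : RatFunc K) ^ 3 = 4 * RatFunc.C b ^ 4 := by
    rw [← map_pow]
    have h : (b * u) ^ 3 = 4 * b ^ 4 := by linear_combination b ^ 3 * hu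
    rw [h, map_mul, map_ofNat, map_pow]
  have hωsum : ω ^ 2 + ω + 1 = 0 := by
    have h' : (ω - 1) * (ω ^ 2 + ω + 1) = 0 := by linear_combination hω
    rcases mul_eq_zero.mp h' with h'' | h''
    · exact absurd (sub_eq_zero.mp h'') hω1
    · exact h''
  have hd3 : ((-(RatFunc.C (b * u)) : RatFunc K)) ^ 3 = -(4 * RatFunc.C b ^ 4) := by
    rw [Odd.neg_pow ⟨1, by norm_num⟩, hbu3]
  have hD : (4 * RatFunc.C b ^ 4 : RatFunc K) ≠ 0 := by
    apply mul_ne_zero _ (pow_ne_zero _ hCb)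
    have h : (4 : RatFunc K) = 2 * 2 := by norm_num
    rw [h]; exact mul_ne_zero hC2 hC2
  have heq : ∀ k, W.Equation (Px k) Py := by
    intro k
    have hk : (RatFunc.C (ω ^ k) : RatFunc K) ^ 3 = 1 := by
      rw [← map_pow, ← pow_mul, mul_comm k 3, pow_mul, hω, one_pow, map_one]
    have e1 : (RatFunc.C r * (RatFunc.X - RatFunc.C c) / (2 * RatFunc.C b ^ 2)) ^ 2
        = RatFunc.C c * (RatFunc.X - RatFunc.C c) ^ 2 / (4 * RatFunc.C b ^ 4) := by
      rw [div_pow, mul_pow, hrC]; congr 1; ring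
    have e2 : (RatFunc.C (ω ^ k) * (RatFunc.X - RatFunc.C c) / (-(RatFunc.C (b * u)))) ^ 3
        = -((RatFunc.X - RatFunc.C c) ^ 3 / (4 * RatFunc.C b ^ 4)) := by
      rw [div_pow, mul_pow, hk, one_mul, hd3, div_neg]
    have e3 : RatFunc.X * ((RatFunc.X - RatFunc.C c) / (2 * RatFunc.C b ^ 2)) ^ 2
        = RatFunc.X * (RatFunc.X - RatFunc.C c) ^ 2 / (4 * RatFunc.C b ^ 4) := by
      rw [div_pow, mul_div_assoc]; congr 2; ring
    have key : (RatFunc.C r * (RatFunc.X - RatFunc.C c) / (2 * RatFunc.C b ^ 2)) ^ 2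
        = (RatFunc.C (ω ^ k) * (RatFunc.X - RatFunc.C c) / (-(RatFunc.C (b * u)))) ^ 3
          + RatFunc.X * ((RatFunc.X - RatFunc.C c) / (2 * RatFunc.C b ^ 2)) ^ 2 := by
      rw [e1, e2, e3, neg_div', ← add_div, div_eq_div_iff hD hD]
      ring
    rw [hW, WeierstrassCurve.Affine.equation_iff, hPx, hPy]
    linear_combination key
  refine ⟨heq, ?_⟩
  intro h₀ h₁ h₂
  have hx01 : Px 0 ≠ Px 1 := by
    intro h
    rw [hPx 0, hPx 1, div_eq_div_iff hCbun hCbun] at h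
    have h' := mul_right_cancel₀ hCbun h
    have h'' := mul_right_cancel₀ hs h'
    rw [pow_zero, pow_one] at h''
    exact hω1 (hCinj h'').symm
  have hslope : W.slope (Px 0) (Px 1) Py Py = 0 := by
    rw [slope_of_X_ne hx01, sub_self, zero_div]
  have hsumC : (RatFunc.C ω : RatFunc K) ^ 2 + RatFunc.C ω + 1 = 0 := by
    have h := congrArg (RatFunc.C : K →+* RatFunc K) hωsum
    simpa [map_add, map_pow] using h
  have hX : W.addX (Px 0) (Px 1) (W.slope (Px 0) (Px 1) Py Py) = Px 2 := by
    rw [hslope, hW]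
    show (0 : RatFunc K) ^ 2 + 0 * 0 - 0 - Px 0 - Px 1 = Px 2
    rw [hPx 0, hPx 1, hPx 2, pow_zero, pow_one, map_one]
    simp only [map_pow]
    field_simp
    linear_combination (norm := ring_nf) ((RatFunc.X - RatFunc.C c) * (RatFunc.C b * RatFunc.C u)
      + (RatFunc.C c - RatFunc.X) * (1 + RatFunc.C b * RatFunc.C u)
      + 2 * (RatFunc.X - RatFunc.C c)) * hsumC
  have hY : W.negAddY (Px 0) (Px 1) Py (W.slope (Px 0) (Px 1) Py Py) = Py := by
    rw [hslope]
    show (0 : RatFunc K) * (W.addX (Px 0) (Px 1) 0 - Px 0) + Py = Py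
    rw [zero_mul, zero_add]
  have hsome : ∀ {x1 y1 x2 y2 : RatFunc K} (hA : W.Nonsingular x1 y1)
      (hB : W.Nonsingular x2 y2), x1 = x2 → y1 = y2 →
      Point.some _ _ hA = Point.some _ _ hB := by
    intro x1 y1 x2 y2 hA hB hx hy
    subst hx; subst hy; rfl
  rw [WeierstrassCurve.Affine.Point.add_of_X_ne' hx01,
    hsome (WeierstrassCurve.Affine.nonsingular_negAdd h₀ h₁ fun h => (hx01 h.1).elim) h₂ hX hY,
    neg_add_cancel]
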